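/- Let U be a compact real interval, let f and f_n (n ∈ ℕ) be continuous, strictly monotone real functions on U, and suppose that B_{f_n}(x,y,z) → B_f(x,y,z) as n → ∞ for every (x,y,z) ∈ U³ with x ≠ z. Then M_{f_n} → M_f uniformly with respect to a and w; that is, for every ε > 0 there exists N such that for all n > N, all m, all a ∈ Uᵐ and all weight vectors w, |M_{f_n}(a,w) − M_f(a,w)| < ε. -/

import Mathlib

open Filter Set

lemma invUC {p q : ℝ} (hpq : p < q) {h : ℝ → ℝ}
    (hc : ContinuousOn h (Set.Icc p q)) (hm : StrictAntiOn h (Set.Icc p q))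
    {ε : ℝ} (hε : 0 < ε) :
    ∃ δ > 0, ∀ u ∈ Set.Icc p q, ∀ v ∈ Set.Icc p q, |h u - h v| < δ → |u - v| < ε := by
  set K : Set (ℝ × ℝ) := (Set.Icc p q ×ˢ Set.Icc p q) ∩ {x | ε ≤ |x.1 - x.2|} with hK
  have hKc : IsCompact K := by
    apply (isCompact_Icc.prod isCompact_Icc).inter_right
    exact isClosed_le continuous_const ((continuous_fst.sub continuous_snd).abs)
  rcases K.eq_empty_or_nonempty with hKe | hKne
  · refine ⟨1, one_pos, fun u hu v hv _ => ?_⟩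
    by_contra hcon
    push_neg at hcon
    have : (u, v) ∈ K := ⟨Set.mk_mem_prod hu hv, hcon⟩
    simp [hKe] at this
  · have hφc : ContinuousOn (fun x : ℝ × ℝ => |h x.1 - h x.2|) K := by
      apply ContinuousOn.abs
      apply ContinuousOn.sub
      · exact hc.comp continuous_fst.continuousOn (fun x hx => hx.1.1)
      · exact hc.comp continuous_snd.continuousOn (fun x hx => hx.1.2)
    obtain ⟨x0, hx0K, hx0min⟩ := hKc.exists_isMinOn hKne hφc
    have hx0pos : 0 < |h x0.1 - h x0.2| := by
      have hne : x0.1 ≠ x0.2 := by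
        intro hcc
        have := hx0K.2
        simp only [Set.mem_setOf_eq, hcc, sub_self, abs_zero] at this
        linarith
      have : h x0.1 ≠ h x0.2 := by
        rcases lt_or_gt_of_ne hne with hlt | hlt
        · exact (hm hx0K.1.1 hx0K.1.2 hlt).ne'
        · exact (hm hx0K.1.2 hx0K.1.1 hlt).ne
      exact abs_pos.2 (sub_ne_zero.2 this)
    refine ⟨_, hx0pos, fun u hu v hv hlt => ?_⟩
    by_contra hcon
    push_neg at hcon
    have hmem : (u, v) ∈ K := ⟨Set.mk_mem_prod hu hv, hcon⟩
    have hle : |h x0.1 - h x0.2| ≤ |h u - h v| := hx0min hmem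
    linarith

lemma polya {p q : ℝ} (hpq : p < q) {h : ℝ → ℝ} {H : ℕ → ℝ → ℝ}
    (hc : ContinuousOn h (Set.Icc p q))
    (hA : AntitoneOn h (Set.Icc p q))
    (hH : ∀ n, AntitoneOn (H n) (Set.Icc p q))
    (hpt : ∀ x ∈ Set.Icc p q, Tendsto (fun n => H n x) atTop (nhds (h x)))
    {δ : ℝ} (hδ : 0 < δ) :
    ∃ N : ℕ, ∀ n > N, ∀ x ∈ Set.Icc p q, |H n x - h x| < δ := by
  -- uniform continuity of h
  have huc := isCompact_Icc.uniformContinuousOn_of_continuous hc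
  rw [Metric.uniformContinuousOn_iff] at huc
  obtain ⟨η, hη, hucη⟩ := huc (δ/3) (by linarith)
  -- partition
  obtain ⟨K, hK⟩ := exists_nat_gt ((q - p) / η)
  have hK0 : 0 < K := by
    by_contra hc0
    push_neg at hc0
    interval_cases K
    simp at hK
    nlinarith [div_pos (sub_pos.2 hpq) hη]
  set step : ℝ := (q - p) / K with hstep
  have hstep0 : 0 < step := div_pos (sub_pos.2 hpq) (by positivity)
  have hstepη : step < η := by
    rw [hstep, div_lt_iff₀ (by positivity : (0:ℝ) < (K:ℝ))]
    rw [div_lt_iff₀ hη] at hK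
    linarith
  set t : ℕ → ℝ := fun j => p + j * step with ht
  have htK : t K = q := by
    simp only [ht, hstep]
    field_simp
    ring
  have htmem : ∀ j ≤ K, t j ∈ Set.Icc p q := by
    intro j hj
    constructor
    · simp only [ht]; nlinarith [hstep0, Nat.cast_nonneg (α := ℝ) j]
    · have hjc : (j : ℝ) ≤ K := Nat.cast_le.2 hj
      have hKs : (K : ℝ) * step = q - p := by
        rw [hstep]; field_simp
      simp only [ht]
      nlinarith [hstep0]
  -- pointwise convergence at the partition points, simultaneously
  have hev : ∀ᶠ n in atTop, ∀ j ∈ Finset.range (K+1), |H n (t j) - h (t j)| < δ/3 := by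
    apply (Filter.eventually_all_finset _).2
    intro j hj
    have hjK : j ≤ K := Nat.lt_succ_iff.1 (Finset.mem_range.1 hj)
    have := hpt (t j) (htmem j hjK)
    have := Metric.tendsto_atTop.1 this (δ/3) (by linarith)
    obtain ⟨N, hN⟩ := this
    filter_upwards [eventually_ge_atTop N] with n hn
    have := hN n hn
    rwa [Real.dist_eq] at this
  obtain ⟨N, hN⟩ := Filter.eventually_atTop.1 hev
  refine ⟨N, fun n hn x hx => ?_⟩
  have hN' : ∀ j ∈ Finset.range (K+1), |H n (t j) - h (t j)| < δ/3 := hN n (le_of_lt hn)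
  -- find the subinterval containing x
  set j : ℕ := min ⌊(x - p) / step⌋₊ (K - 1) with hj
  have hjK : j + 1 ≤ K := by
    have : j ≤ K - 1 := min_le_right _ _
    omega
  have hxp : 0 ≤ (x - p) / step := div_nonneg (sub_nonneg.2 hx.1) hstep0.le
  have hlo : t j ≤ x := by
    have h1 : (j : ℝ) ≤ (x - p) / step := by
      have : (j : ℝ) ≤ (⌊(x - p) / step⌋₊ : ℝ) := Nat.cast_le.2 (min_le_left _ _)
      exact this.trans (Nat.floor_le hxp)
    simp only [ht]
    rw [le_div_iff₀ hstep0] at h1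
    linarith
  have hhi : x ≤ t (j + 1) := by
    rcases le_or_gt (⌊(x - p) / step⌋₊) (K-1) with hcase | hcase
    · have hjeq : j = ⌊(x - p) / step⌋₊ := min_eq_left hcase
      have h2 : (x - p) / step < (j : ℝ) + 1 := by
        rw [hjeq]
        exact Nat.lt_floor_add_one _
      simp only [ht]
      rw [div_lt_iff₀ hstep0] at h2
      push_cast
      linarith
    · -- floor ≥ K, so x = q essentially; j = K - 1
      have hjeq : j = K - 1 := min_eq_right (le_of_lt hcase)
      have : j + 1 = K := by omega
      rw [this, htK]
      exact hx.2
  have hmemj : t j ∈ Set.Icc p q := htmem j (by omega)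
  have hmemj1 : t (j+1) ∈ Set.Icc p q := htmem (j+1) hjK
  have hb1 : |H n (t j) - h (t j)| < δ/3 := hN' j (Finset.mem_range.2 (by omega))
  have hb2 : |H n (t (j+1)) - h (t (j+1))| < δ/3 := hN' (j+1) (Finset.mem_range.2 (by omega))
  have hb3 : |h (t j) - h (t (j+1))| < δ/3 := by
    have : dist (t j) (t (j+1)) < η := by
      rw [Real.dist_eq]
      simp only [ht]
      push_cast
      rw [show p + (j:ℝ) * step - (p + ((j:ℝ)+1) * step) = -step by ring, abs_neg,
        abs_of_pos hstep0]
      exact hstepη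
    have := hucη _ hmemj _ hmemj1 this
    rwa [Real.dist_eq] at this
  have hgx1 : H n x ≤ H n (t j) := hH n hmemj hx hlo
  have hgx2 : H n (t (j+1)) ≤ H n x := hH n hx hmemj1 hhi
  have hhx1 : h x ≤ h (t j) := hA hmemj hx hlo
  have hhx2 : h (t (j+1)) ≤ h x := hA hx hmemj1 hhi
  rw [abs_lt] at *
  constructor <;> [nlinarith; nlinarith]

/-- **Corollary (uniform convergence on a compact interval).** If `U` is compact and
`B_{f_n} → B_f` pointwise on `Δ`, then `M_{f_n} → M_f` uniformly with respect to `a` and `w`. -/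
theorem stmt_3 (p q : ℝ) (hpq : p ≤ q)
    (f : ℝ → ℝ) (F : ℕ → ℝ → ℝ)
    (hfc : ContinuousOn f (Set.Icc p q))
    (hfm : StrictMonoOn f (Set.Icc p q) ∨ StrictAntiOn f (Set.Icc p q))
    (hFc : ∀ n, ContinuousOn (F n) (Set.Icc p q))
    (hFm : ∀ n, StrictMonoOn (F n) (Set.Icc p q) ∨ StrictAntiOn (F n) (Set.Icc p q))
    (hB : ∀ x ∈ Set.Icc p q, ∀ y ∈ Set.Icc p q, ∀ z ∈ Set.Icc p q, x ≠ z →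
      Filter.Tendsto (fun n => (F n x - F n y) / (F n x - F n z)) Filter.atTop
        (nhds ((f x - f y) / (f x - f z)))) :
    ∀ ε > (0 : ℝ), ∃ N : ℕ, ∀ n > N, ∀ (m : ℕ) (a : Fin m → ℝ), (∀ i, a i ∈ Set.Icc p q) →
      ∀ w : Fin m → ℝ, (∀ i, 0 < w i) → (∑ i, w i) = 1 →
      ∀ Mf ∈ Set.Icc p q, f Mf = ∑ i, w i * f (a i) →
      ∀ MF ∈ Set.Icc p q, F n MF = ∑ i, w i * F n (a i) →
      |MF - Mf| < ε := by
  intro ε hε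
  rcases eq_or_lt_of_le hpq with heq | hlt
  · -- degenerate case p = q
    refine ⟨0, fun n _ m a _ w _ _ Mf hMf _ MF hMF _ => ?_⟩
    rw [← heq] at hMf hMF
    simp only [Set.Icc_self, Set.mem_singleton_iff] at hMf hMF
    simp [hMf, hMF, hε]
  -- nondegenerate case
  have hp : p ∈ Set.Icc p q := ⟨le_refl _, hpq⟩
  have hq : q ∈ Set.Icc p q := ⟨hpq, le_refl _⟩
  set h : ℝ → ℝ := fun x => (f q - f x) / (f q - f p) with hh
  set H : ℕ → ℝ → ℝ := fun n x => (F n q - F n x) / (F n q - F n p) with hH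
  -- denominators nonzero
  have hD : f q - f p ≠ 0 := by
    rcases hfm with hm | hm
    · exact (sub_pos.2 (hm hp hq hlt)).ne'
    · exact (sub_neg.2 (hm hp hq hlt)).ne
  have hDn : ∀ n, F n q - F n p ≠ 0 := by
    intro n
    rcases hFm n with hm | hm
    · exact (sub_pos.2 (hm hp hq hlt)).ne'
    · exact (sub_neg.2 (hm hp hq hlt)).ne
  -- h strictly antitone
  have hanti : StrictAntiOn h (Set.Icc p q) := by
    intro u hu v hv huv
    simp only [hh]
    rcases hfm with hm | hm
    · have hDpos : 0 < f q - f p := sub_pos.2 (hm hp hq hlt)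
      rw [div_lt_div_iff_of_pos_right hDpos]
      have := hm hu hv huv
      linarith
    · have hDneg : f q - f p < 0 := sub_neg.2 (hm hp hq hlt)
      rw [div_lt_div_right_of_neg hDneg]
      have := hm hu hv huv
      linarith
  have hHanti : ∀ n, StrictAntiOn (H n) (Set.Icc p q) := by
    intro n u hu v hv huv
    simp only [hH]
    rcases hFm n with hm | hm
    · have hDpos : 0 < F n q - F n p := sub_pos.2 (hm hp hq hlt)
      rw [div_lt_div_iff_of_pos_right hDpos]
      have := hm hu hv huv
      linarith
    · have hDneg : F n q - F n p < 0 := sub_neg.2 (hm hp hq hlt)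
      rw [div_lt_div_right_of_neg hDneg]
      have := hm hu hv huv
      linarith
  -- h continuous
  have hhc : ContinuousOn h (Set.Icc p q) := (continuousOn_const.sub hfc).div_const _
  -- pointwise convergence H n x → h x
  have hpt : ∀ x ∈ Set.Icc p q, Filter.Tendsto (fun n => H n x) Filter.atTop (nhds (h x)) :=
    fun x hx => hB q hq x hx p hp (ne_of_gt hlt)
  -- get δ from inverse uniform continuity
  obtain ⟨δ, hδ, hinv⟩ := invUC hlt hhc hanti hε
  -- get N from Pólya
  obtain ⟨N, hN⟩ := polya hlt hhc hanti.antitoneOn (fun n => (hHanti n).antitoneOn) hpt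
    (show (0:ℝ) < δ/3 by linarith)
  refine ⟨N, fun n hn m a ha w hw hw1 Mf hMf hfMf MF hMF hFMF => ?_⟩
  -- mean relation for h
  have hkey : ∀ (g : ℝ → ℝ) (M : ℝ), g M = ∑ i, w i * g (a i) →
      (g q - g M) / (g q - g p) = ∑ i, w i * ((g q - g (a i)) / (g q - g p)) := by
    intro g M hM
    rw [hM]
    rw [show (∑ i, w i * ((g q - g (a i)) / (g q - g p)))
        = (∑ i, w i * (g q - g (a i))) / (g q - g p) by
      rw [Finset.sum_div]; simp [mul_div_assoc]]
    congr 1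
    calc g q - ∑ i, w i * g (a i)
        = (∑ i, w i) * g q - ∑ i, w i * g (a i) := by rw [hw1, one_mul]
      _ = ∑ i, (w i * g q - w i * g (a i)) := by
          rw [Finset.sum_sub_distrib, Finset.sum_mul]
      _ = ∑ i, w i * (g q - g (a i)) := by simp [mul_sub]
  have hMfeq : h Mf = ∑ i, w i * h (a i) := hkey f Mf hfMf
  have hMFeq : H n MF = ∑ i, w i * H n (a i) := hkey (F n) MF hFMF
  -- bound |H n MF - h Mf|
  have hsum : |H n MF - h Mf| ≤ δ/3 := by
    rw [hMFeq, hMfeq, ← Finset.sum_sub_distrib]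
    calc |∑ i, (w i * H n (a i) - w i * h (a i))|
        ≤ ∑ i, |w i * H n (a i) - w i * h (a i)| := Finset.abs_sum_le_sum_abs _ _
      _ ≤ ∑ i, w i * (δ/3) := by
          apply Finset.sum_le_sum
          intro i _
          rw [← mul_sub, abs_mul, abs_of_pos (hw i)]
          exact mul_le_mul_of_nonneg_left (le_of_lt (hN n hn (a i) (ha i))) (hw i).le
      _ = δ/3 := by rw [← Finset.sum_mul, hw1, one_mul]
  have hMFb : |h MF - H n MF| < δ/3 := by
    rw [abs_sub_comm]; exact hN n hn MF hMF
  have hfinal : |h MF - h Mf| < δ := by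
    calc |h MF - h Mf| ≤ |h MF - H n MF| + |H n MF - h Mf| := abs_sub_le _ _ _
      _ < δ/3 + δ/3 := by linarith [hsum, hMFb]
      _ < δ := by linarith
  exact hinv MF hMF Mf hMf hfinal
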